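/- Let G be a graph with vertex subsets X and Y such that Y separates all pairs of distinct vertices of X (for distinct u, v in X, N[u] ∩ Y ≠ N[v] ∩ Y) and Y dominates X (every vertex of X has a neighbor in Y or belongs to Y). Then there exists a subset C of Y of size at most |X| such that C separates all pairs of distinct vertices of X and C dominates X. -/
import Mathlib


open SimpleGraph

/-- The closed neighborhood of a vertex. -/
def cnbr {V : Type*} (G : SimpleGraph V) (v : V) : Set V := insert v (G.neighborSet v)

/-- `C` is an identifying code of `G`: every vertex is dominated by `C` and the
closed-neighborhood traces on `C` are pairwise distinct. -/
def IsIdCode {V : Type*} (G : SimpleGraph V) (C : Set V) : Prop :=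
  (∀ v, (cnbr G v ∩ C).Nonempty) ∧
  ∀ u v : V, cnbr G u ∩ C = cnbr G v ∩ C → u = v

/-- The minimum size of an identifying code of `G`. -/
noncomputable def gammaID {V : Type*} (G : SimpleGraph V) : ℕ :=
  sInf {n | ∃ C : Set V, IsIdCode G C ∧ C.ncard = n}

lemma sep_aux {V : Type*} (G : SimpleGraph V) (Y : Set V) :
    ∀ n (X : Set V), X.Finite → X.ncard = n →
    (∀ u ∈ X, ∀ v ∈ X, u ≠ v → cnbr G u ∩ Y ≠ cnbr G v ∩ Y) →
    ∃ S ⊆ Y, S.Finite ∧ S.ncard + 1 ≤ max X.ncard 1 ∧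
      (∀ u ∈ X, ∀ v ∈ X, u ≠ v → cnbr G u ∩ S ≠ cnbr G v ∩ S) := by
  intro n
  induction n using Nat.strong_induction_on with
  | _ n ih =>
    intro X hXfin hXcard hsep
    by_cases hn : n ≤ 1
    · refine ⟨∅, Set.empty_subset _, Set.finite_empty, ?_, ?_⟩
      · simp
      · intro u hu v hv huv _
        exact huv (((Set.ncard_le_one hXfin).mp (hXcard ▸ hn)) u hu v hv)
    · push_neg at hn
      obtain ⟨u, hu, v, hv, huv⟩ := (Set.one_lt_ncard hXfin).mp (hXcard ▸ hn)
      have hne := hsep u hu v hv huv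
      have : ¬ ∀ y, y ∈ cnbr G u ∩ Y ↔ y ∈ cnbr G v ∩ Y := fun h => hne (Set.ext h)
      push_neg at this
      obtain ⟨y, hy⟩ := this
      have hyY : y ∈ Y := by
        by_cases h1 : y ∈ cnbr G u ∩ Y
        · exact h1.2
        · have h2 : y ∈ cnbr G v ∩ Y := by tauto
          exact h2.2
      set X₁ : Set V := {x ∈ X | y ∈ cnbr G x} with hX₁
      set X₂ : Set V := {x ∈ X | y ∉ cnbr G x} with hX₂
      have hX₁fin : X₁.Finite := hXfin.subset (Set.sep_subset _ _)
      have hX₂fin : X₂.Finite := hXfin.subset (Set.sep_subset _ _)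
      have hunion : X₁ ∪ X₂ = X := by
        ext x; simp only [hX₁, hX₂, Set.mem_union, Set.mem_setOf_eq]; tauto
      have hdisj : Disjoint X₁ X₂ := by
        rw [Set.disjoint_left]; intro x h1 h2; exact h2.2 h1.2
      have hsum : X₁.ncard + X₂.ncard = n := by
        rw [← hXcard, ← hunion, Set.ncard_union_eq hdisj hX₁fin hX₂fin]
      have h1ne : X₁.Nonempty := by
        by_cases h1 : y ∈ cnbr G u ∩ Y
        · exact ⟨u, hu, h1.1⟩
        · have h2 : y ∈ cnbr G v ∩ Y := by tauto
          exact ⟨v, hv, h2.1⟩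
      have h2ne : X₂.Nonempty := by
        by_cases h1 : y ∈ cnbr G u ∩ Y
        · have h2 : y ∉ cnbr G v ∩ Y := by tauto
          exact ⟨v, hv, fun hc => h2 ⟨hc, hyY⟩⟩
        · exact ⟨u, hu, fun hc => h1 ⟨hc, hyY⟩⟩
      have h1lt : X₁.ncard < n := by
        have := h2ne.ncard_pos hX₂fin; omega
      have h2lt : X₂.ncard < n := by
        have := h1ne.ncard_pos hX₁fin; omega
      obtain ⟨S₁, hS₁Y, hS₁fin, hS₁card, hS₁sep⟩ :=
        ih _ h1lt X₁ hX₁fin rfl (fun a ha b hb hab => hsep a ha.1 b hb.1 hab)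
      obtain ⟨S₂, hS₂Y, hS₂fin, hS₂card, hS₂sep⟩ :=
        ih _ h2lt X₂ hX₂fin rfl (fun a ha b hb hab => hsep a ha.1 b hb.1 hab)
      refine ⟨insert y (S₁ ∪ S₂), ?_, ?_, ?_, ?_⟩
      · exact Set.insert_subset hyY (Set.union_subset hS₁Y hS₂Y)
      · exact ((hS₁fin.union hS₂fin).insert y)
      · have hb1 : max X₁.ncard 1 = X₁.ncard := max_eq_left (h1ne.ncard_pos hX₁fin)
        have hb2 : max X₂.ncard 1 = X₂.ncard := max_eq_left (h2ne.ncard_pos hX₂fin)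
        have h3 : (insert y (S₁ ∪ S₂)).ncard ≤ (S₁ ∪ S₂).ncard + 1 :=
          Set.ncard_insert_le _ _
        have h4 : (S₁ ∪ S₂).ncard ≤ S₁.ncard + S₂.ncard := Set.ncard_union_le _ _
        rw [hb1] at hS₁card; rw [hb2] at hS₂card
        have : 1 ≤ max X.ncard 1 := le_max_right _ _
        have hX : max X.ncard 1 = n := by rw [hXcard]; omega
        omega
      · intro a ha b hb hab heq
        have hyS : y ∈ insert y (S₁ ∪ S₂) := Set.mem_insert _ _
        have hiff : y ∈ cnbr G a ↔ y ∈ cnbr G b := by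
          constructor
          · intro h; have : y ∈ cnbr G a ∩ insert y (S₁ ∪ S₂) := ⟨h, hyS⟩
            rw [heq] at this; exact this.1
          · intro h; have : y ∈ cnbr G b ∩ insert y (S₁ ∪ S₂) := ⟨h, hyS⟩
            rw [← heq] at this; exact this.1
        by_cases hya : y ∈ cnbr G a
        · have ha1 : a ∈ X₁ := ⟨ha, hya⟩
          have hb1 : b ∈ X₁ := ⟨hb, hiff.mp hya⟩
          apply hS₁sep a ha1 b hb1 hab
          have hsub : S₁ ⊆ insert y (S₁ ∪ S₂) :=
            (Set.subset_union_left).trans (Set.subset_insert _ _)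
          ext z
          constructor
          · intro ⟨hz1, hz2⟩
            have : z ∈ cnbr G b ∩ insert y (S₁ ∪ S₂) := by
              rw [← heq]; exact ⟨hz1, hsub hz2⟩
            exact ⟨this.1, hz2⟩
          · intro ⟨hz1, hz2⟩
            have : z ∈ cnbr G a ∩ insert y (S₁ ∪ S₂) := by
              rw [heq]; exact ⟨hz1, hsub hz2⟩
            exact ⟨this.1, hz2⟩
        · have ha1 : a ∈ X₂ := ⟨ha, hya⟩
          have hb1 : b ∈ X₂ := ⟨hb, fun h => hya (hiff.mpr h)⟩
          apply hS₂sep a ha1 b hb1 hab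
          have hsub : S₂ ⊆ insert y (S₁ ∪ S₂) :=
            (Set.subset_union_right).trans (Set.subset_insert _ _)
          ext z
          constructor
          · intro ⟨hz1, hz2⟩
            have : z ∈ cnbr G b ∩ insert y (S₁ ∪ S₂) := by
              rw [← heq]; exact ⟨hz1, hsub hz2⟩
            exact ⟨this.1, hz2⟩
          · intro ⟨hz1, hz2⟩
            have : z ∈ cnbr G a ∩ insert y (S₁ ∪ S₂) := by
              rw [heq]; exact ⟨hz1, hsub hz2⟩
            exact ⟨this.1, hz2⟩

theorem stmt_5 {V : Type*} (G : SimpleGraph V) (X Y : Set V)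
    (hXfin : X.Finite)
    (hsep : ∀ u ∈ X, ∀ v ∈ X, u ≠ v → cnbr G u ∩ Y ≠ cnbr G v ∩ Y)
    (hdom : ∀ x ∈ X, (cnbr G x ∩ Y).Nonempty) :
    ∃ C ⊆ Y, C.ncard ≤ X.ncard ∧
      (∀ u ∈ X, ∀ v ∈ X, u ≠ v → cnbr G u ∩ C ≠ cnbr G v ∩ C) ∧
      ∀ x ∈ X, (cnbr G x ∩ C).Nonempty := by
  rcases X.eq_empty_or_nonempty with hX | hX
  · subst hX
    exact ⟨∅, Set.empty_subset _, by simp, by simp, by simp⟩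
  obtain ⟨S, hSY, hSfin, hScard, hSsep⟩ := sep_aux G Y X.ncard X hXfin rfl hsep
  rw [max_eq_left (hX.ncard_pos hXfin)] at hScard
  by_cases hd : ∀ x ∈ X, (cnbr G x ∩ S).Nonempty
  · exact ⟨S, hSY, by omega, hSsep, hd⟩
  · push_neg at hd
    obtain ⟨x₀, hx₀X, hx₀⟩ := hd
    obtain ⟨y₀, hy₀x, hy₀Y⟩ := hdom x₀ hx₀X
    refine ⟨insert y₀ S, Set.insert_subset hy₀Y hSY, ?_, ?_, ?_⟩
    · have := Set.ncard_insert_le y₀ S; omega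
    · intro a ha b hb hab heq
      apply hSsep a ha b hb hab
      have hsub : S ⊆ insert y₀ S := Set.subset_insert _ _
      ext z
      constructor
      · intro ⟨hz1, hz2⟩
        have : z ∈ cnbr G b ∩ insert y₀ S := by rw [← heq]; exact ⟨hz1, hsub hz2⟩
        exact ⟨this.1, hz2⟩
      · intro ⟨hz1, hz2⟩
        have : z ∈ cnbr G a ∩ insert y₀ S := by rw [heq]; exact ⟨hz1, hsub hz2⟩
        exact ⟨this.1, hz2⟩
    · intro x hxX
      by_cases hx : (cnbr G x ∩ S).Nonempty
      · obtain ⟨z, hz1, hz2⟩ := hx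
        exact ⟨z, hz1, Set.subset_insert _ _ hz2⟩
      · -- x is not dominated by S; then x = x₀ since traces both empty
        have hx' : cnbr G x ∩ S = ∅ := Set.not_nonempty_iff_eq_empty.mp hx
        have hx₀' : cnbr G x₀ ∩ S = ∅ := hx₀
        have hxx₀ : x = x₀ := by
          by_contra hne
          exact hSsep x hxX x₀ hx₀X hne (hx'.trans hx₀'.symm)
        subst hxx₀
        exact ⟨y₀, hy₀x, Set.mem_insert _ _⟩
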